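/- arXiv:2110.14640 — 3 statements merged into one kernel-verified Lean document; each statement's English description precedes it below -/
import Mathlib

section
/- Let N ≥ 3 be an integer, Ω ⊂ ℝ^N a nonempty bounded open set, a, b : ℝ^N → ℝ continuous and positive on the closure of Ω, and λ₁ᵃ, λ₁ᵇ > 0. Suppose φ_a, φ_b : ℝ^N → ℝ are C¹ on Ω, vanish outside Ω, are positive on Ω, lie in L^q(Ω) with finite nonzero L^q norm, have square-integrable gradients over Ω, and satisfy ∫_Ω a(x)|∇φ_a(x)|² dx = λ₁ᵃ ∫_Ω φ_a(x)² dx and ∫_Ω b(x)|∇φ_b(x)|² dx = λ₁ᵇ ∫_Ω φ_b(x)² dx. Then for every λ ≥ (‖φ_a‖_{L^q(Ω)} ‖φ_b‖_{L^q(Ω)} / ∫_Ω φ_a φ_b dx) · |Ω|^{1−2/q} · max(λ₁ᵃ, λ₁ᵇ), one has F_λ(φ_a/‖φ_a‖_{L^q(Ω)}, φ_b/‖φ_b‖_{L^q(Ω)}) ≤ 0, where |Ω| denotes the Lebesgue measure of Ω. -/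
open MeasureTheory Real Filter Topology
open scoped ENNReal NNReal

noncomputable section

lemma norm_fderiv_div_const' {E : Type*} [NormedAddCommGroup E] [NormedSpace ℝ E]
    (f : E → ℝ) (c : ℝ) (hc : c ≠ 0) (x : E) :
    ‖fderiv ℝ (fun y => f y / c) x‖ = ‖fderiv ℝ f x‖ / |c| := by
  have hfun : (fun y => f y / c) = fun y => c⁻¹ • f y := by
    ext y; simp [div_eq_inv_mul, smul_eq_mul]
  by_cases hd : DifferentiableAt ℝ f x
  · rw [hfun, fderiv_fun_const_smul hd, norm_smul]
    simp [abs_inv, inv_mul_eq_div]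
  · have hd2 : ¬ DifferentiableAt ℝ (fun y => f y / c) x := by
      intro h
      have h2 := h.const_smul c
      have heq : (c • fun y => f y / c) = f := by
        ext y; rw [Pi.smul_apply, smul_eq_mul]; field_simp
      rw [heq] at h2
      exact hd h2
    rw [fderiv_zero_of_not_differentiableAt hd, fderiv_zero_of_not_differentiableAt hd2]
    simp

/-- Hölder-type bound: `∫ f² ≤ (∫ |f|^q)^(2/q) * μ(Ω)^(1-2/q)`. -/
lemma l2_le_lq {E : Type*} [NormedAddCommGroup E] [MeasurableSpace E] [BorelSpace E]
    {μ : Measure E} [IsFiniteMeasure μ]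
    (f : E → ℝ) (q : ℝ) (hq2 : 2 < q)
    (hf : MemLp f (ENNReal.ofReal q) μ) :
    (∫ x, (f x) ^ 2 ∂μ) ≤ (∫ x, |f x| ^ q ∂μ) ^ (2 / q) * (μ Set.univ).toReal ^ (1 - 2 / q) := by
  have hq0 : 0 < q := by linarith
  have hconj : Real.HolderConjugate (q / 2) (q / (q - 2)) := by
    rw [Real.holderConjugate_iff]
    constructor
    · rw [lt_div_iff₀ (by norm_num : (0:ℝ) < 2)]; linarith
    · have h1 : q ≠ 0 := ne_of_gt hq0
      have h2 : q - 2 ≠ 0 := by intro h; linarith [h]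
      field_simp
      ring
  have hmemf : MemLp (fun x => |f x| ^ (2:ℝ)) (ENNReal.ofReal (q / 2)) μ := by
    have h := hf.norm_rpow_div (ENNReal.ofReal 2)
    have h2 : (ENNReal.ofReal 2).toReal = 2 := ENNReal.toReal_ofReal (by norm_num)
    have h3 : ENNReal.ofReal q / ENNReal.ofReal 2 = ENNReal.ofReal (q / 2) :=
      (ENNReal.ofReal_div_of_pos (by norm_num : (0:ℝ) < 2)).symm
    rw [h2, h3] at h
    simpa [Real.norm_eq_abs] using h
  have hmemc : MemLp (fun _ : E => (1:ℝ)) (ENNReal.ofReal (q / (q - 2))) μ :=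
    memLp_const 1
  have holder := integral_mul_le_Lp_mul_Lq_of_nonneg hconj
    (f := fun x => |f x| ^ (2:ℝ)) (g := fun _ => (1:ℝ))
    (Eventually.of_forall fun x => Real.rpow_nonneg (abs_nonneg _) _)
    (Eventually.of_forall fun _ => zero_le_one) hmemf hmemc
  have habs2 : ∀ t : ℝ, |t| ^ (2:ℝ) = t ^ 2 := fun t => by
    rw [show (2:ℝ) = ((2:ℕ):ℝ) by norm_num, Real.rpow_natCast, sq_abs]
  have hL : (∫ x, |f x| ^ (2:ℝ) * (1:ℝ) ∂μ) = ∫ x, (f x) ^ 2 ∂μ := by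
    refine integral_congr_ae (Eventually.of_forall fun x => ?_)
    simp only [mul_one]
    exact habs2 (f x)
  have hR1 : (∫ x, (|f x| ^ (2:ℝ)) ^ (q / 2) ∂μ) = ∫ x, |f x| ^ q ∂μ := by
    refine integral_congr_ae (Eventually.of_forall fun x => ?_)
    show (|f x| ^ (2:ℝ)) ^ (q / 2) = |f x| ^ q
    rw [← Real.rpow_mul (abs_nonneg _), show 2 * (q / 2) = q by ring]
  have hR2 : (∫ x, (1:ℝ) ^ (q / (q - 2)) ∂μ) = (μ Set.univ).toReal := by
    simp [Real.one_rpow, Measure.real]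
  rw [hL, hR1, hR2] at holder
  have he1 : 1 / (q / 2) = 2 / q := one_div_div q 2
  have he2 : 1 / (q / (q - 2)) = 1 - 2 / q := by
    rw [one_div_div]
    field_simp
  rw [he1, he2] at holder
  exact holder

theorem stmt_1
    (N : ℕ) (hN : 3 ≤ N)
    (Ω : Set (EuclideanSpace ℝ (Fin N)))
    (hΩo : IsOpen Ω) (hΩb : Bornology.IsBounded Ω) (hΩne : Ω.Nonempty)
    (a b : EuclideanSpace ℝ (Fin N) → ℝ)
    (ha : Continuous a) (hb : Continuous b)
    (hapos : ∀ x ∈ closure Ω, 0 < a x) (hbpos : ∀ x ∈ closure Ω, 0 < b x)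
    (lam1a lam1b : ℝ) (hlam1a : 0 < lam1a) (hlam1b : 0 < lam1b)
    (q : ℝ) (hq : q = 2 * (N : ℝ) / ((N : ℝ) - 2))
    (φa φb : EuclideanSpace ℝ (Fin N) → ℝ)
    (hφa : ContDiffOn ℝ 1 φa Ω) (hφb : ContDiffOn ℝ 1 φb Ω)
    (hφa0 : ∀ x ∉ Ω, φa x = 0) (hφb0 : ∀ x ∉ Ω, φb x = 0)
    (hφapos : ∀ x ∈ Ω, 0 < φa x) (hφbpos : ∀ x ∈ Ω, 0 < φb x)
    (hφaLq : MemLp φa (ENNReal.ofReal q) (volume.restrict Ω))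
    (hφbLq : MemLp φb (ENNReal.ofReal q) (volume.restrict Ω))
    (hφaLqne : (∫ x in Ω, |φa x| ^ q) ≠ 0)
    (hφbLqne : (∫ x in Ω, |φb x| ^ q) ≠ 0)
    (hφagrad : IntegrableOn (fun x => ‖fderiv ℝ φa x‖ ^ 2) Ω)
    (hφbgrad : IntegrableOn (fun x => ‖fderiv ℝ φb x‖ ^ 2) Ω)
    (heiga : (∫ x in Ω, a x * ‖fderiv ℝ φa x‖ ^ 2) = lam1a * ∫ x in Ω, (φa x) ^ 2)
    (heigb : (∫ x in Ω, b x * ‖fderiv ℝ φb x‖ ^ 2) = lam1b * ∫ x in Ω, (φb x) ^ 2)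
    (lam : ℝ)
    (hlam : lam ≥
      ((∫ x in Ω, |φa x| ^ q) ^ (1 / q) * (∫ x in Ω, |φb x| ^ q) ^ (1 / q)
          / ∫ x in Ω, φa x * φb x)
        * (volume Ω).toReal ^ (1 - 2 / q) * max lam1a lam1b) :
    (1 / 2) * (∫ x in Ω, a x *
        ‖fderiv ℝ (fun y => φa y / (∫ x in Ω, |φa x| ^ q) ^ (1 / q)) x‖ ^ 2)
      + (1 / 2) * (∫ x in Ω, b x *
        ‖fderiv ℝ (fun y => φb y / (∫ x in Ω, |φb x| ^ q) ^ (1 / q)) x‖ ^ 2)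
      - lam * ∫ x in Ω,
          (φa x / (∫ x in Ω, |φa x| ^ q) ^ (1 / q)) *
          (φb x / (∫ x in Ω, |φb x| ^ q) ^ (1 / q))
    ≤ 0 := by
  -- basic facts about q
  have hN3 : (3:ℝ) ≤ (N:ℝ) := by exact_mod_cast hN
  have hq2 : 2 < q := by
    rw [hq, lt_div_iff₀ (by linarith : (0:ℝ) < (N:ℝ) - 2)]
    linarith
  have hq0 : 0 < q := by linarith
  -- finite measure on Ω
  have hμfin : volume Ω < ⊤ := hΩb.measure_lt_top
  haveI : IsFiniteMeasure (volume.restrict Ω) :=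
    ⟨by rw [Measure.restrict_apply_univ]; exact hμfin⟩
  -- abbreviations
  set Na := ∫ x in Ω, |φa x| ^ q with hNa_def
  set Nb := ∫ x in Ω, |φb x| ^ q with hNb_def
  set A := Na ^ (1 / q) with hA_def
  set B := Nb ^ (1 / q) with hB_def
  set Ia := ∫ x in Ω, (φa x) ^ 2 with hIa_def
  set Ib := ∫ x in Ω, (φb x) ^ 2 with hIb_def
  set I := ∫ x in Ω, φa x * φb x with hI_def
  set V := (volume Ω).toReal ^ (1 - 2 / q) with hV_def
  set M := max lam1a lam1b with hM_def
  have hNa_pos : 0 < Na :=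
    lt_of_le_of_ne (integral_nonneg fun x => Real.rpow_nonneg (abs_nonneg _) _)
      (Ne.symm hφaLqne)
  have hNb_pos : 0 < Nb :=
    lt_of_le_of_ne (integral_nonneg fun x => Real.rpow_nonneg (abs_nonneg _) _)
      (Ne.symm hφbLqne)
  have hA_pos : 0 < A := Real.rpow_pos_of_pos hNa_pos _
  have hB_pos : 0 < B := Real.rpow_pos_of_pos hNb_pos _
  have hV_nonneg : 0 ≤ V := Real.rpow_nonneg ENNReal.toReal_nonneg _
  -- integrability of the product and positivity of I
  have h2le : (2 : ℝ≥0∞) ≤ ENNReal.ofReal q := by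
    rw [show (2 : ℝ≥0∞) = ENNReal.ofReal 2 by simp]
    exact ENNReal.ofReal_le_ofReal (by linarith)
  have h2a : MemLp φa 2 (volume.restrict Ω) := hφaLq.mono_exponent h2le
  have h2b : MemLp φb 2 (volume.restrict Ω) := hφbLq.mono_exponent h2le
  have hpqr : (1 : ℝ≥0∞) / 1 = 1 / 2 + 1 / 2 := by
    rw [one_div, one_div, ENNReal.inv_two_add_inv_two, inv_one]
  have hI_mem : MemLp (φa • φb) 1 (volume.restrict Ω) := h2b.smul h2a (hpqr := ⟨by rw [ENNReal.inv_two_add_inv_two, inv_one]⟩)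
  have hI_int : IntegrableOn (fun x => φa x * φb x) Ω volume := by
    have := memLp_one_iff_integrable.mp hI_mem
    exact this
  have hI_pos : 0 < I := by
    rw [hI_def]
    rw [setIntegral_pos_iff_support_of_nonneg_ae
      ((ae_restrict_iff' hΩo.measurableSet).2 (Eventually.of_forall fun x hx =>
        le_of_lt (mul_pos (hφapos x hx) (hφbpos x hx)))) hI_int]
    refine lt_of_lt_of_le (hΩo.measure_pos volume hΩne) (measure_mono ?_)
    intro x hx
    exact ⟨ne_of_gt (mul_pos (hφapos x hx) (hφbpos x hx)), hx⟩
  -- Hölder bounds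
  have hA2 : A ^ 2 = Na ^ (2 / q) := by
    rw [hA_def, ← Real.rpow_natCast (Na ^ (1/q)) 2, ← Real.rpow_mul (le_of_lt hNa_pos)]
    congr 1
    push_cast
    ring
  have hB2 : B ^ 2 = Nb ^ (2 / q) := by
    rw [hB_def, ← Real.rpow_natCast (Nb ^ (1/q)) 2, ← Real.rpow_mul (le_of_lt hNb_pos)]
    congr 1
    push_cast
    ring
  have hrestrict_univ : (volume.restrict Ω) Set.univ = volume Ω := Measure.restrict_apply_univ _
  have hIa_le : Ia ≤ A ^ 2 * V := by
    rw [hA2, hIa_def, hV_def]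
    have := l2_le_lq φa q hq2 hφaLq
    rwa [hrestrict_univ] at this
  have hIb_le : Ib ≤ B ^ 2 * V := by
    rw [hB2, hIb_def, hV_def]
    have := l2_le_lq φb q hq2 hφbLq
    rwa [hrestrict_univ] at this
  have hIa_nonneg : 0 ≤ Ia := integral_nonneg fun x => sq_nonneg _
  have hIb_nonneg : 0 ≤ Ib := integral_nonneg fun x => sq_nonneg _
  -- rewrite the goal integrals
  have hga : (∫ x in Ω, a x * ‖fderiv ℝ (fun y => φa y / A) x‖ ^ 2)
      = (lam1a * Ia) / A ^ 2 := by
    have hpt : ∀ x, a x * ‖fderiv ℝ (fun y => φa y / A) x‖ ^ 2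
        = (a x * ‖fderiv ℝ φa x‖ ^ 2) / A ^ 2 := by
      intro x
      rw [norm_fderiv_div_const' φa A (ne_of_gt hA_pos) x, abs_of_pos hA_pos, div_pow,
        mul_div_assoc]
    simp_rw [hpt]
    rw [integral_div, heiga]
  have hgb : (∫ x in Ω, b x * ‖fderiv ℝ (fun y => φb y / B) x‖ ^ 2)
      = (lam1b * Ib) / B ^ 2 := by
    have hpt : ∀ x, b x * ‖fderiv ℝ (fun y => φb y / B) x‖ ^ 2
        = (b x * ‖fderiv ℝ φb x‖ ^ 2) / B ^ 2 := by
      intro x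
      rw [norm_fderiv_div_const' φb B (ne_of_gt hB_pos) x, abs_of_pos hB_pos, div_pow,
        mul_div_assoc]
    simp_rw [hpt]
    rw [integral_div, heigb]
  have hgI : (∫ x in Ω, (φa x / A) * (φb x / B)) = I / (A * B) := by
    simp_rw [div_mul_div_comm]
    rw [integral_div]
  rw [hga, hgb, hgI]
  -- the key lower bound on lam * (I / (A*B))
  have hlam' : V * M ≤ lam * (I / (A * B)) := by
    have h := mul_le_mul_of_nonneg_right hlam
      (le_of_lt (div_pos hI_pos (mul_pos hA_pos hB_pos)))
    have heq : (A * B / I) * V * M * (I / (A * B)) = V * M := by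
      field_simp
    rw [heq] at h
    exact h
  have hM_nonneg : 0 ≤ M := le_trans (le_of_lt hlam1a) (le_max_left _ _)
  have h1 : (lam1a * Ia) / A ^ 2 ≤ M * V := by
    rw [div_le_iff₀ (by positivity)]
    calc lam1a * Ia ≤ lam1a * (A ^ 2 * V) :=
          mul_le_mul_of_nonneg_left hIa_le (le_of_lt hlam1a)
      _ ≤ M * (A ^ 2 * V) :=
          mul_le_mul_of_nonneg_right (le_max_left _ _) (by positivity)
      _ = M * V * A ^ 2 := by ring
  have h2 : (lam1b * Ib) / B ^ 2 ≤ M * V := by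
    rw [div_le_iff₀ (by positivity)]
    calc lam1b * Ib ≤ lam1b * (B ^ 2 * V) :=
          mul_le_mul_of_nonneg_left hIb_le (le_of_lt hlam1b)
      _ ≤ M * (B ^ 2 * V) :=
          mul_le_mul_of_nonneg_right (le_max_right _ _) (by positivity)
      _ = M * V * B ^ 2 := by ring
  linarith [h1, h2, hlam']
end
end

section
/- Let N ≥ 1 be an integer, x₀ ∈ ℝ^N, and let u : ℝ^N → ℝ be a continuously differentiable function with compact support. Then ∫_{ℝ^N} (∇u(x)·(x−x₀))² dx ≥ (N/2)² ∫_{ℝ^N} u(x)² dx. -/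
open MeasureTheory Real Filter Topology

noncomputable section

open Metric Set

open MeasureTheory

lemma cs_integral {α : Type*} [MeasurableSpace α] {μ : Measure α} {f g : α → ℝ}
    (hf : Integrable (fun x => f x ^ 2) μ) (hg : Integrable (fun x => g x ^ 2) μ)
    (hfg : Integrable (fun x => f x * g x) μ) :
    (∫ x, f x * g x ∂μ) ^ 2 ≤ (∫ x, f x ^ 2 ∂μ) * ∫ x, g x ^ 2 ∂μ := by
  set A := ∫ x, f x ^ 2 ∂μ
  set B := ∫ x, f x * g x ∂μ
  set C := ∫ x, g x ^ 2 ∂μ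
  have key : ∀ t : ℝ, 0 ≤ A * t ^ 2 + (2 * B) * t + C := by
    intro t
    have h1 : ∀ x, (t * f x + g x) ^ 2
        = t ^ 2 * f x ^ 2 + 2 * t * (f x * g x) + g x ^ 2 := by intro x; ring
    have h2 : 0 ≤ ∫ x, (t * f x + g x) ^ 2 ∂μ :=
      integral_nonneg fun x => sq_nonneg _
    calc (0:ℝ) ≤ ∫ x, (t * f x + g x) ^ 2 ∂μ := h2
      _ = t ^ 2 * A + 2 * t * B + C := by
          have i1 : Integrable (fun x => t ^ 2 * f x ^ 2) μ := hf.const_mul _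
          have i2 : Integrable (fun x => 2 * t * (f x * g x)) μ := hfg.const_mul _
          have i12 : Integrable (fun x => t ^ 2 * f x ^ 2 + 2 * t * (f x * g x)) μ := i1.add i2
          simp_rw [h1]
          rw [integral_add i12 hg, integral_add i1 i2,
            integral_const_mul, integral_const_mul]
      _ = A * t ^ 2 + (2 * B) * t + C := by ring
  have key' : ∀ t : ℝ, 0 ≤ A * (t * t) + (2 * B) * t + C := by
    intro t; have := key t; nlinarith [key t]
  have := discrim_le_zero key'
  rw [discrim] at this
  nlinarith
open MeasureTheory Metric Set

lemma ibp_pi (n : ℕ) (x₀ : Fin (n+1) → ℝ) (v : (Fin (n+1) → ℝ) → ℝ)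
    (hv : ContDiff ℝ 1 v) (hvs : HasCompactSupport v) :
    ∫ x : Fin (n+1) → ℝ, fderiv ℝ v x (x - x₀)
      = -((n:ℝ)+1) * ∫ x : Fin (n+1) → ℝ, v x := by
  obtain ⟨R, hR⟩ := hvs.isBounded.subset_closedBall 0
  set S : ℝ := max R 0 with hS
  have hS0 : 0 ≤ S := le_max_right _ _
  have hRS : tsupport v ⊆ closedBall 0 S :=
    hR.trans (closedBall_subset_closedBall (le_max_left _ _))
  set a : Fin (n+1) → ℝ := fun _ => -(S+1) with ha
  set b : Fin (n+1) → ℝ := fun _ => S+1 with hb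
  have hab : a ≤ b := fun i => by simp [ha, hb]; linarith
  have hsub : tsupport v ⊆ Icc a b := by
    intro x hx
    have hx' : ‖x‖ ≤ S := by simpa [mem_closedBall] using hRS hx
    refine ⟨fun i => ?_, fun i => ?_⟩ <;>
    · have := (abs_le.1 ((norm_le_pi_norm x i).trans hx'))
      simp [ha, hb]; linarith [this.1, this.2]
  set D : (Fin (n+1) → ℝ) → (Fin (n+1) → ℝ) →L[ℝ] ℝ := fderiv ℝ v with hD
  have hDcont : Continuous D := hv.continuous_fderiv one_ne_zero
  set f : Fin (n+1) → (Fin (n+1) → ℝ) → ℝ := fun i x => v x * (x i - x₀ i) with hf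
  set f' : Fin (n+1) → (Fin (n+1) → ℝ) → (Fin (n+1) → ℝ) →L[ℝ] ℝ :=
    fun i x => v x • (ContinuousLinearMap.proj i) + (x i - x₀ i) • D x with hf'
  have Hd : ∀ x, ∀ i, HasFDerivAt (f i) (f' i x) x := by
    intro x i
    have h1 : HasFDerivAt v (D x) x := (hv.differentiable one_ne_zero x).hasFDerivAt
    have h2' : HasFDerivAt (fun y : Fin (n+1) → ℝ => y i)
        (ContinuousLinearMap.proj (R := ℝ) (φ := fun _ : Fin (n+1) => ℝ) i) x :=
      (ContinuousLinearMap.proj (R := ℝ) (φ := fun _ : Fin (n+1) => ℝ) i).hasFDerivAt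
    have h2 := h2'.sub_const (x₀ i)
    exact h1.mul h2
  have hdiv : ∀ x : Fin (n+1) → ℝ,
      (∑ i, f' i x (Pi.single i 1)) = ((n:ℝ)+1) * v x + D x (x - x₀) := by
    intro x
    have hxx : (x - x₀) = ∑ i, (x i - x₀ i) • (Pi.single i 1 : Fin (n+1) → ℝ) := by
      have : ∀ i, (x i - x₀ i) • (Pi.single i 1 : Fin (n+1) → ℝ)
          = Pi.single i ((x - x₀) i) := by
        intro i
        rw [← Pi.single_smul]
        simp
      simp_rw [this]
      exact (Finset.univ_sum_single (x - x₀)).symm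
    have hD2 : D x (x - x₀) = ∑ i, (x i - x₀ i) * D x (Pi.single i 1) := by
      rw [hxx, map_sum]
      simp [smul_eq_mul]
    rw [hD2]
    simp only [hf', ContinuousLinearMap.add_apply, ContinuousLinearMap.smul_apply,
      ContinuousLinearMap.proj_apply, Pi.single_eq_same, smul_eq_mul, mul_one]
    rw [Finset.sum_add_distrib]
    simp [Finset.sum_const, mul_comm]
  set g : (Fin (n+1) → ℝ) → ℝ := fun x => ((n:ℝ)+1) * v x + D x (x - x₀) with hg
  have hgcont : Continuous g := by
    apply Continuous.add
    · exact continuous_const.mul hv.continuous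
    · exact hDcont.clm_apply (continuous_id.sub continuous_const)
  have hgsupp : Function.support g ⊆ tsupport v := by
    intro x hx
    by_contra hxs
    have h1 : v x = 0 := image_eq_zero_of_notMem_tsupport hxs
    have h2 : D x = 0 := by
      by_contra h2
      exact hxs (support_fderiv_subset ℝ (f := v) h2)
    simp [hg, h1, h2] at hx
  have hgcs : HasCompactSupport g := hvs.mono' hgsupp
  have hgint : Integrable g := hgcont.integrable_of_hasCompactSupport hgcs
  have Hc : ∀ i, ContinuousOn (f i) (Icc a b) := by
    intro i
    exact ((hv.continuous.mul ((continuous_apply i).sub continuous_const))).continuousOn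
  have Hi : IntegrableOn (fun x => ∑ i, f' i x (Pi.single i 1)) (Icc a b) := by
    have : (fun x => ∑ i, f' i x (Pi.single i 1)) = g := funext hdiv
    rw [this]
    exact hgint.integrableOn
  have key := integral_divergence_of_hasFDerivAt_off_countable a b hab
    (fun x i => f i x) (fun x => ContinuousLinearMap.pi fun i => f' i x) ∅ countable_empty
    (continuousOn_pi.2 Hc) (fun x hx => hasFDerivAt_pi.2 (fun i => Hd x i)) Hi
  have hfaces : ∀ (i : Fin (n+1)) (c : ℝ), |c| = S + 1 →
      ∀ x : Fin n → ℝ, f i (Fin.insertNth (α := fun _ => ℝ) i c x) = 0 := by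
    intro i c hc x
    have hmem : (Fin.insertNth (α := fun _ => ℝ) i c x) ∉ tsupport v := by
      intro hmem
      have h1 : ‖Fin.insertNth (α := fun _ => ℝ) i c x‖ ≤ S := by
        simpa [mem_closedBall] using hRS hmem
      have h2 : |c| ≤ S := by
        have h3 := (norm_le_pi_norm (Fin.insertNth (α := fun _ => ℝ) i c x) i).trans h1
        simpa [Real.norm_eq_abs, Fin.insertNth_apply_same] using h3
      rw [hc] at h2; linarith
    simp only [hf]
    rw [image_eq_zero_of_notMem_tsupport hmem, zero_mul]
  have hrhs : (∑ i : Fin (n+1),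
        ((∫ x in Icc (a ∘ i.succAbove) (b ∘ i.succAbove), f i (i.insertNth (b i) x)) -
          ∫ x in Icc (a ∘ i.succAbove) (b ∘ i.succAbove), f i (i.insertNth (a i) x))) = 0 := by
    apply Finset.sum_eq_zero
    intro i _
    have h1 : ∀ x : Fin n → ℝ, f i (i.insertNth (b i) x) = 0 :=
      hfaces i (b i) (by simp [hb]; linarith)
    have h2 : ∀ x : Fin n → ℝ, f i (i.insertNth (a i) x) = 0 :=
      hfaces i (a i) (by simp [ha]; rw [abs_of_nonpos] <;> linarith)
    simp [h1, h2]
  have hbox : ∫ x in Icc a b, g x = ∫ x, g x := by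
    apply setIntegral_eq_integral_of_forall_compl_eq_zero
    intro x hx
    by_contra hgx
    exact hx (hsub (hgsupp hgx))
  have key2 : (∫ x in Icc a b, ∑ i, f' i x (Pi.single i 1)) = 0 := by
    rw [hrhs] at key
    simpa [ContinuousLinearMap.pi_apply] using key
  have hzero : ∫ x, g x = 0 := by
    rw [← hbox]
    rw [setIntegral_congr_fun measurableSet_Icc (fun x _ => (hdiv x).symm)]
    exact key2
  -- split integral
  have hvint : Integrable v := hv.continuous.integrable_of_hasCompactSupport hvs
  have hterm : Integrable (fun x => D x (x - x₀)) := by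
    apply Continuous.integrable_of_hasCompactSupport
    · exact hDcont.clm_apply (continuous_id.sub continuous_const)
    · apply hvs.mono'
      intro x hx
      by_contra hxs
      have h2 : D x = 0 := by
        by_contra h2
        exact hxs (support_fderiv_subset ℝ (f := v) h2)
      simp [h2] at hx
  have := integral_add (hvint.const_mul ((n:ℝ)+1)) hterm
  rw [hg] at hzero
  rw [integral_add (hvint.const_mul ((n:ℝ)+1)) hterm] at hzero
  rw [integral_const_mul] at hzero
  linarith [hzero]

lemma main_pi (n : ℕ) (x₀ : Fin (n+1) → ℝ) (v : (Fin (n+1) → ℝ) → ℝ)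
    (hv : ContDiff ℝ 1 v) (hvs : HasCompactSupport v) :
    (∫ x : Fin (n+1) → ℝ, (fderiv ℝ v x (x - x₀)) ^ 2)
      ≥ (((n:ℝ)+1) / 2) ^ 2 * ∫ x : Fin (n+1) → ℝ, (v x) ^ 2 := by
  set D : (Fin (n+1) → ℝ) → (Fin (n+1) → ℝ) →L[ℝ] ℝ := fderiv ℝ v with hD
  have hDcont : Continuous D := hv.continuous_fderiv one_ne_zero
  set F : (Fin (n+1) → ℝ) → ℝ := fun x => D x (x - x₀) with hF
  have hFcont : Continuous F := hDcont.clm_apply (continuous_id.sub continuous_const)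
  have hFsupp : Function.support F ⊆ tsupport v := by
    intro x hx
    by_contra hxs
    have h2 : D x = 0 := by
      by_contra h2
      exact hxs (support_fderiv_subset ℝ (f := v) h2)
    simp [hF, h2] at hx
  have hFcs : HasCompactSupport F := hvs.mono' hFsupp
  have hsq : ∀ f : (Fin (n+1) → ℝ) → ℝ,
      Function.support (fun x => f x ^ 2) ⊆ Function.support f := by
    intro f x hx
    simp only [Function.mem_support] at hx ⊢
    exact fun h => hx (by rw [h]; ring)
  have hF2int : Integrable (fun x => F x ^ 2) :=
    (hFcont.pow 2).integrable_of_hasCompactSupport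
      (hFcs.mono' ((hsq F).trans (subset_tsupport F)))
  have hv2int : Integrable (fun x => v x ^ 2) :=
    (hv.continuous.pow 2).integrable_of_hasCompactSupport
      (hvs.mono' ((hsq v).trans (subset_tsupport v)))
  have hFvint : Integrable (fun x => F x * v x) :=
    (hFcont.mul hv.continuous).integrable_of_hasCompactSupport
      (hvs.mono' (by
        intro x hx
        apply subset_tsupport v
        simp only [Function.mem_support] at hx ⊢
        exact fun h => hx (by rw [Pi.mul_apply, h, mul_zero])))
  -- IBP applied to v^2
  set w : (Fin (n+1) → ℝ) → ℝ := fun x => v x * v x with hw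
  have hwc : ContDiff ℝ 1 w := hv.mul hv
  have hws : HasCompactSupport w := by
    apply hvs.mono'
    intro x hx
    apply subset_tsupport v
    simp only [Function.mem_support] at hx ⊢
    exact fun h => hx (by simp only [hw]; rw [h, mul_zero])
  have hwd : ∀ x, HasFDerivAt w (v x • D x + v x • D x) x := by
    intro x
    exact ((hv.differentiable one_ne_zero x).hasFDerivAt).mul ((hv.differentiable one_ne_zero x).hasFDerivAt)
  have hwf : ∀ x, fderiv ℝ w x (x - x₀) = 2 * (F x * v x) := by
    intro x
    rw [(hwd x).fderiv]
    simp [hF]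
    ring
  have hibp := ibp_pi n x₀ w hwc hws
  have hB : ∫ x, F x * v x = -(((n:ℝ)+1)/2) * ∫ x, v x ^ 2 := by
    have h1 : ∫ x, fderiv ℝ w x (x - x₀) = ∫ x, 2 * (F x * v x) := by
      exact integral_congr_ae (Filter.Eventually.of_forall hwf)
    rw [h1, integral_const_mul] at hibp
    have h2 : ∫ x, w x = ∫ x, v x ^ 2 := by
      refine integral_congr_ae (Filter.Eventually.of_forall fun x => ?_)
      simp [hw, pow_two]
    rw [h2] at hibp
    linarith
  have hCS := cs_integral (μ := (volume : Measure (Fin (n+1) → ℝ))) hF2int hv2int hFvint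
  set A := ∫ x, F x ^ 2 with hA
  set C := ∫ x, v x ^ 2 with hC
  have hC0 : 0 ≤ C := integral_nonneg fun x => sq_nonneg _
  have hA0 : 0 ≤ A := integral_nonneg fun x => sq_nonneg _
  rcases eq_or_lt_of_le hC0 with h | h
  · rw [ge_iff_le, ← h]
    simpa using hA0
  · rw [hB] at hCS
    have : (((n:ℝ)+1)/2) ^ 2 * C ≤ A := by nlinarith
    exact this

theorem stmt_14
    (N : ℕ) (hN : 1 ≤ N)
    (x₀ : EuclideanSpace ℝ (Fin N))
    (u : EuclideanSpace ℝ (Fin N) → ℝ)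
    (hu : ContDiff ℝ 1 u) (hus : HasCompactSupport u) :
    (∫ x : EuclideanSpace ℝ (Fin N), (fderiv ℝ u x (x - x₀)) ^ 2)
      ≥ ((N : ℝ) / 2) ^ 2 * ∫ x : EuclideanSpace ℝ (Fin N), (u x) ^ 2 := by
  obtain ⟨n, rfl⟩ : ∃ n, N = n + 1 := ⟨N - 1, (Nat.succ_pred_eq_of_pos hN).symm⟩
  set e := EuclideanSpace.equiv (Fin (n+1)) ℝ with he
  set v : (Fin (n+1) → ℝ) → ℝ := u ∘ e.symm with hv
  have hvc : ContDiff ℝ 1 v := hu.comp e.symm.contDiff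
  have hvs : HasCompactSupport v := hus.comp_homeomorph e.symm.toHomeomorph
  have hue : ∀ x, u x = v (e x) := by intro x; simp [hv]
  have hφ := EuclideanSpace.volume_preserving_symm_measurableEquiv_toLp (Fin (n+1))
  have hφe : ∀ x : EuclideanSpace ℝ (Fin (n+1)),
      (MeasurableEquiv.toLp 2 (Fin (n+1) → ℝ)).symm x = e x := fun x => rfl
  have hfd : ∀ x : EuclideanSpace ℝ (Fin (n+1)),
      fderiv ℝ u x (x - x₀) = fderiv ℝ v (e x) (e x - e x₀) := by
    intro x
    have hcomp : fderiv ℝ (v ∘ e) x = (fderiv ℝ v (e x)).comp (e : EuclideanSpace ℝ (Fin (n+1)) →L[ℝ] (Fin (n+1) → ℝ)) := by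
      rw [fderiv_comp x (hvc.differentiable one_ne_zero _) e.differentiableAt, e.fderiv]
    have hu' : u = v ∘ e := funext hue
    rw [hu', hcomp]
    simp [ContinuousLinearMap.comp_apply, map_sub]
  have h1 : (∫ x : EuclideanSpace ℝ (Fin (n+1)), (fderiv ℝ u x (x - x₀)) ^ 2)
      = ∫ y : Fin (n+1) → ℝ, (fderiv ℝ v y (y - e x₀)) ^ 2 := by
    rw [← hφ.integral_comp (MeasurableEquiv.toLp 2 (Fin (n+1) → ℝ)).symm.measurableEmbedding
      (fun y => (fderiv ℝ v y (y - e x₀)) ^ 2)]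
    refine integral_congr_ae (Filter.Eventually.of_forall fun x => ?_)
    simp only [hφe, hfd]
  have h2 : (∫ x : EuclideanSpace ℝ (Fin (n+1)), (u x) ^ 2)
      = ∫ y : Fin (n+1) → ℝ, (v y) ^ 2 := by
    rw [← hφ.integral_comp (MeasurableEquiv.toLp 2 (Fin (n+1) → ℝ)).symm.measurableEmbedding
      (fun y => (v y) ^ 2)]
    refine integral_congr_ae (Filter.Eventually.of_forall fun x => ?_)
    simp only [hφe, hue]
  rw [h1, h2]
  have := main_pi n (e x₀) v hvc hvs
  have hcast : ((n+1 : ℕ) : ℝ) = (n:ℝ) + 1 := by push_cast; ring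
  rw [hcast]
  exact this
end
end

section
/- Let N ≥ 1 be an integer, Ω ⊂ ℝ^N a nonempty bounded open set, x₀ ∈ Ω, and a, b : ℝ^N → ℝ continuously differentiable on Ω. Suppose a admits the expansion of order k at x₀ with coefficient A_k > 0 where k = 2, and b admits the expansion of order l at x₀ with coefficient B_l > 0 where l > 2. Let λ₁ > 0 and let φ₁ : ℝ^N → ℝ be a Lipschitz function vanishing outside Ω, positive on Ω, and satisfying ∫_Ω |∇φ₁(x)|² dx = λ₁ ∫_Ω φ₁(x)² dx, where ∇φ₁ denotes the almost-everywhere defined gradient. Then for every δ > 0 there exists a Lipschitz function ψ : ℝ^N → ℝ with compact support contained in Ω and ∫_Ω ψ² dx > 0 such that (1/4)∫_Ω (ã(x)+b̃(x))|∇ψ(x)|² dx ≤ ((A₂/2) λ₁ diam(Ω)² + δ) ∫_Ω ψ(x)² dx, where diam(Ω) is the diameter of Ω. -/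
open MeasureTheory Real Filter Topology

noncomputable section

lemma aux_fderiv_min {X : Type*} [NormedAddCommGroup X] [NormedSpace ℝ X] {f : X → ℝ} {y : X}
    (h : ∀ x, f y ≤ f x) : fderiv ℝ f y = 0 := by
  by_cases hd : DifferentiableAt ℝ f y
  · exact IsLocalMin.fderiv_eq_zero (Filter.Eventually.of_forall fun x => h x)
  · exact fderiv_zero_of_not_differentiableAt hd

lemma aux_fderiv_scale {X : Type*} [NormedAddCommGroup X] [NormedSpace ℝ X]
    (φ : X → ℝ) (x₀ : X) {c : ℝ} (hc : c ≠ 0) (x : X) :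
    fderiv ℝ (fun z => φ (x₀ + c • (z - x₀))) x = c • fderiv ℝ φ (x₀ + c • (x - x₀)) := by
  have hS : HasFDerivAt (fun z : X => x₀ + c • (z - x₀)) (c • ContinuousLinearMap.id ℝ X) x := by
    have h1 : HasFDerivAt (fun z : X => z - x₀) (ContinuousLinearMap.id ℝ X) x :=
      (hasFDerivAt_id x).sub_const x₀
    exact (h1.const_smul c).const_add x₀
  by_cases hd : DifferentiableAt ℝ φ (x₀ + c • (x - x₀))
  · have h1 : HasFDerivAt (fun z => φ (x₀ + c • (z - x₀)))
        ((fderiv ℝ φ (x₀ + c • (x - x₀))).comp (c • ContinuousLinearMap.id ℝ X)) x :=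
      hd.hasFDerivAt.comp x hS
    rw [h1.fderiv]
    ext v
    simp
  · have hd2 : ¬ DifferentiableAt ℝ (fun z => φ (x₀ + c • (z - x₀))) x := by
      intro hcontra
      apply hd
      have hinv : DifferentiableAt ℝ (fun w : X => x₀ + c⁻¹ • (w - x₀)) (x₀ + c • (x - x₀)) :=
        ((differentiableAt_id.sub_const x₀).const_smul c⁻¹).const_add x₀
      have hx : (fun w : X => x₀ + c⁻¹ • (w - x₀)) (x₀ + c • (x - x₀)) = x := by
        simp [smul_smul, inv_mul_cancel₀ hc]
      have hcomp : DifferentiableAt ℝ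
          ((fun z => φ (x₀ + c • (z - x₀))) ∘ (fun w : X => x₀ + c⁻¹ • (w - x₀)))
          (x₀ + c • (x - x₀)) := by
        refine DifferentiableAt.comp _ ?_ hinv
        have : x₀ + c⁻¹ • (x₀ + c • (x - x₀) - x₀) = x := by
          simp [smul_smul, inv_mul_cancel₀ hc]
        rw [this]; exact hcontra
      have heq : ((fun z => φ (x₀ + c • (z - x₀))) ∘ (fun w : X => x₀ + c⁻¹ • (w - x₀))) = φ := by
        funext w
        simp [Function.comp, smul_smul, mul_inv_cancel₀ hc]
      rwa [heq] at hcomp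
    rw [fderiv_zero_of_not_differentiableAt hd, fderiv_zero_of_not_differentiableAt hd2, smul_zero]

lemma aux_integral_scale {N : ℕ} (f : EuclideanSpace ℝ (Fin N) → ℝ)
    (x₀ : EuclideanSpace ℝ (Fin N)) {ξ : ℝ} (hξ : 0 < ξ) :
    ∫ x, f (x₀ + ξ⁻¹ • (x - x₀)) = ξ ^ N * ∫ x, f x := by
  have h1 : ∫ x, f (x₀ + ξ⁻¹ • (x - x₀)) = ∫ x, (fun u => f (x₀ + ξ⁻¹ • u)) (x - x₀) := rfl
  rw [h1, integral_sub_right_eq_self (fun u => f (x₀ + ξ⁻¹ • u)) x₀,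
    MeasureTheory.Measure.integral_comp_inv_smul volume (fun u => f (x₀ + u)) ξ]
  rw [finrank_euclideanSpace_fin, abs_of_pos (pow_pos hξ N), smul_eq_mul]
  congr 1
  exact integral_add_left_eq_self (fun u => f u) x₀


lemma aux_arith {xi kappa Q c W : ℝ} (hxi : 0 < xi) (hkey : W ≤ kappa * xi * Q)
    (hk : kappa = 4 * c) (N : ℕ) :
    (1/4) * (xi⁻¹ ^ 2 * (xi ^ N * (xi * W))) ≤ c * (xi ^ N * Q) := by
  have hfac : (0:ℝ) ≤ (1/4) * (xi⁻¹ ^ 2 * xi ^ N * xi) := by positivity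
  have h1 : xi⁻¹ ^ 2 * xi * xi = 1 := by
    rw [show xi⁻¹ ^ 2 * xi * xi = xi⁻¹ ^2 * xi ^2 by ring, inv_pow]
    field_simp
  calc (1/4) * (xi⁻¹ ^ 2 * (xi ^ N * (xi * W)))
      = ((1/4) * (xi⁻¹ ^ 2 * xi ^ N * xi)) * W := by ring
    _ ≤ ((1/4) * (xi⁻¹ ^ 2 * xi ^ N * xi)) * (kappa * xi * Q) :=
        mul_le_mul_of_nonneg_left hkey hfac
    _ = (xi⁻¹ ^ 2 * xi * xi) * (c * (xi ^ N * Q)) := by rw [hk]; ring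
    _ = c * (xi ^ N * Q) := by rw [h1]; ring

set_option maxHeartbeats 2000000 in
theorem stmt_18
    (N : ℕ) (hN : 1 ≤ N)
    (Ω : Set (EuclideanSpace ℝ (Fin N)))
    (hΩo : IsOpen Ω) (hΩb : Bornology.IsBounded Ω) (hΩne : Ω.Nonempty)
    (x₀ : EuclideanSpace ℝ (Fin N)) (hx₀ : x₀ ∈ Ω)
    (a b : EuclideanSpace ℝ (Fin N) → ℝ)
    (ha : ContDiffOn ℝ 1 a Ω) (hb : ContDiffOn ℝ 1 b Ω)
    (A₂ l B : ℝ) (hA₂ : 0 < A₂) (hl : 2 < l) (hB : 0 < B)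
    (hexpa : Tendsto (fun x => (a x - a x₀ - A₂ * ‖x - x₀‖ ^ 2) / ‖x - x₀‖ ^ 2)
      (𝓝[≠] x₀) (𝓝 0))
    (hexpb : Tendsto (fun x => (b x - b x₀ - B * ‖x - x₀‖ ^ l) / ‖x - x₀‖ ^ l)
      (𝓝[≠] x₀) (𝓝 0))
    (lam₁ : ℝ) (hlam₁ : 0 < lam₁)
    (φ₁ : EuclideanSpace ℝ (Fin N) → ℝ)
    (hφ₁lip : ∃ C : NNReal, LipschitzWith C φ₁)
    (hφ₁0 : ∀ x ∉ Ω, φ₁ x = 0)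
    (hφ₁pos : ∀ x ∈ Ω, 0 < φ₁ x)
    (hφ₁eig : (∫ x in Ω, ‖fderiv ℝ φ₁ x‖ ^ 2) = lam₁ * ∫ x in Ω, (φ₁ x) ^ 2) :
    ∀ δ : ℝ, 0 < δ → ∃ ψ : EuclideanSpace ℝ (Fin N) → ℝ,
      (∃ C : NNReal, LipschitzWith C ψ) ∧
      HasCompactSupport ψ ∧ tsupport ψ ⊆ Ω ∧
      0 < (∫ x in Ω, (ψ x) ^ 2) ∧
      (1 / 4) * (∫ x in Ω,
          (fderiv ℝ a x (x - x₀) + fderiv ℝ b x (x - x₀)) * ‖fderiv ℝ ψ x‖ ^ 2)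
        ≤ ((A₂ / 2) * lam₁ * Metric.diam Ω ^ 2 + δ) * ∫ x in Ω, (ψ x) ^ 2 := by
  intro δ hδ

  obtain ⟨C, hC⟩ := hφ₁lip
  have hΩmeas : MeasurableSet Ω := hΩo.measurableSet
  have hfin : volume Ω < ⊤ := hΩb.measure_lt_top
  set D : ℝ := Metric.diam Ω with hDdef
  have hD0 : 0 < D := by
    obtain ⟨r, hr0, hrΩ⟩ := Metric.isOpen_iff.mp hΩo x₀ hx₀
    have hmem : x₀ + EuclideanSpace.single (⟨0, hN⟩ : Fin N) (r / 2) ∈ Ω := by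
      apply hrΩ
      simp only [Metric.mem_ball, dist_self_add_left, EuclideanSpace.norm_single]
      rw [Real.norm_eq_abs, abs_of_pos (by linarith)]
      linarith
    have := Metric.dist_le_diam_of_mem hΩb hmem hx₀
    rw [dist_self_add_left, EuclideanSpace.norm_single, Real.norm_eq_abs,
      abs_of_pos (by linarith : (0:ℝ) < r/2)] at this
    linarith
  have hdiam : ∀ y ∈ Ω, ‖y - x₀‖ ≤ D := by
    intro y hy
    have h := Metric.dist_le_diam_of_mem hΩb hy hx₀
    rwa [dist_eq_norm] at h
  clear_value D
  have hφ₁nonneg : ∀ x, 0 ≤ φ₁ x := by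
    intro x
    by_cases hx : x ∈ Ω
    · exact (hφ₁pos x hx).le
    · rw [hφ₁0 x hx]
  -- gradient of φ₁
  set g : EuclideanSpace ℝ (Fin N) → ℝ := fun y => ‖fderiv ℝ φ₁ y‖ ^ 2 with hgdef
  have hgnonneg : ∀ y, 0 ≤ g y := fun y => sq_nonneg _
  have hgbd : ∀ y, g y ≤ (C : ℝ) ^ 2 := by
    intro y
    exact pow_le_pow_left₀ (norm_nonneg _) (norm_fderiv_le_of_lipschitz ℝ hC) 2
  have hgmeas : Measurable g := ((measurable_fderiv ℝ φ₁).norm).pow_const 2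
  have hbdd_int : ∀ (f : EuclideanSpace ℝ (Fin N) → ℝ), AEStronglyMeasurable f (volume.restrict Ω) →
      ∀ K : ℝ, (∀ y ∈ Ω, |f y| ≤ K) → IntegrableOn f Ω := by
    intro f hf K hK
    refine Integrable.mono' (g := fun _ => K) (integrableOn_const hfin.ne) hf ?_
    rw [ae_restrict_iff' hΩmeas]
    exact ae_of_all _ fun y hy => by rw [Real.norm_eq_abs]; exact hK y hy
  have hgint : IntegrableOn g Ω := by
    refine hbdd_int g hgmeas.aestronglyMeasurable ((C:ℝ)^2) fun y _ => ?_
    rw [abs_of_nonneg (hgnonneg y)]; exact hgbd y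
  set Q : ℝ := ∫ x in Ω, (φ₁ x) ^ 2 with hQdef
  have hφ₁cont : Continuous φ₁ := hC.continuous
  have hclcomp : IsCompact (closure Ω) :=
    Metric.isCompact_of_isClosed_isBounded isClosed_closure hΩb.closure
  have hφ₁cs : HasCompactSupport φ₁ := by
    apply HasCompactSupport.intro hclcomp
    exact fun x hx => hφ₁0 x fun hmem => hx (subset_closure hmem)
  have hφ₁sqint : Integrable (fun y => (φ₁ y) ^ 2) := by
    refine Continuous.integrable_of_hasCompactSupport (hφ₁cont.pow 2) ?_
    exact hφ₁cs.comp_left (g := fun t : ℝ => t ^ 2) (by simp)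
  have hQpos : 0 < Q := by
    rw [hQdef, setIntegral_pos_iff_support_of_nonneg_ae
      (ae_of_all _ fun y => sq_nonneg (φ₁ y)) hφ₁sqint.integrableOn]
    refine lt_of_lt_of_le (hΩo.measure_pos volume hΩne) (measure_mono ?_)
    intro y hy
    exact ⟨pow_ne_zero 2 (hφ₁pos y hy).ne', hy⟩
  have hM : ∫ y in Ω, g y = lam₁ * Q := hφ₁eig
  clear_value Q
  have hfφ₁0 : ∀ y ∉ Ω, fderiv ℝ φ₁ y = 0 := by
    intro y hy
    apply aux_fderiv_min
    intro x
    rw [hφ₁0 y hy]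
    exact hφ₁nonneg x
  -- small ball inside Ω
  obtain ⟨r₀, hr₀0, hr₀Ω⟩ := Metric.isOpen_iff.mp hΩo x₀ hx₀
  set ρ : ℝ := r₀ / 2 with hρdef
  have hρ0 : 0 < ρ := by positivity
  have hρΩ : Metric.closedBall x₀ ρ ⊆ Ω := by
    refine subset_trans ?_ hr₀Ω
    intro x hx
    rw [Metric.mem_closedBall] at hx
    rw [Metric.mem_ball]
    linarith
  clear_value ρ
  -- η
  set η : ℝ := δ / (D ^ 2 * lam₁ + 1) with hηdef
  have hηpos : 0 < η := by
    apply div_pos hδ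
    positivity
  have hηδ : η * (D ^ 2 * lam₁) < δ := by
    have hmul : η * (D ^ 2 * lam₁ + 1) = δ := by
      rw [hηdef]; field_simp
    linarith [hηpos, hmul]
  clear_value η
  -- expansion bounds
  obtain ⟨ρa, hρa0, hρa⟩ : ∃ ρa > 0, ∀ x : EuclideanSpace ℝ (Fin N), dist x x₀ ≤ ρa →
      a x - a x₀ ≤ (A₂ + η) * ‖x - x₀‖ ^ 2 := by
    have h1 : ∀ᶠ x in 𝓝[≠] x₀, |(a x - a x₀ - A₂ * ‖x - x₀‖ ^ 2) / ‖x - x₀‖ ^ 2| < η := by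
      have h0 := hexpa (Metric.ball_mem_nhds (0:ℝ) hηpos)
      filter_upwards [h0] with x hx
      rw [Set.mem_preimage, Metric.mem_ball, Real.dist_eq, sub_zero] at hx
      exact hx
    obtain ⟨ε, hε0, hε⟩ := Metric.mem_nhdsWithin_iff.mp (Filter.eventually_iff.mp h1)
    refine ⟨ε/2, by linarith, fun x hx => ?_⟩
    by_cases hxx : x = x₀
    · subst hxx; simp [mul_nonneg (by linarith : (0:ℝ) ≤ A₂ + η) (sq_nonneg _)]
    · have hq := hε ⟨by rw [Metric.mem_ball]; linarith, hxx⟩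
      have hr2 : (0:ℝ) < ‖x - x₀‖ ^ 2 :=
        pow_pos (norm_pos_iff.mpr (sub_ne_zero.mpr hxx)) 2
      rw [Set.mem_setOf_eq] at hq
      have h2 := lt_of_abs_lt hq
      rw [div_lt_iff₀ hr2] at h2
      linarith
  obtain ⟨ρb, hρb0, hρb⟩ : ∃ ρb > 0, ∀ x : EuclideanSpace ℝ (Fin N), dist x x₀ ≤ ρb →
      b x - b x₀ ≤ η * ‖x - x₀‖ ^ 2 := by
    have h1 : ∀ᶠ x in 𝓝[≠] x₀, |(b x - b x₀ - B * ‖x - x₀‖ ^ l) / ‖x - x₀‖ ^ l| < B := by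
      have h0 := hexpb (Metric.ball_mem_nhds (0:ℝ) hB)
      filter_upwards [h0] with x hx
      rw [Set.mem_preimage, Metric.mem_ball, Real.dist_eq, sub_zero] at hx
      exact hx
    obtain ⟨ε, hε0, hε⟩ := Metric.mem_nhdsWithin_iff.mp (Filter.eventually_iff.mp h1)
    have hl2 : (0:ℝ) < l - 2 := by linarith
    set t : ℝ := min 1 ((η / (2*B)) ^ (l-2)⁻¹) with htdef
    have ht0 : 0 < t := by
      apply lt_min one_pos
      exact Real.rpow_pos_of_pos (div_pos hηpos (by linarith)) _
    have htb : 2 * B * t ^ (l-2) ≤ η := by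
      have h2 : t ^ (l-2) ≤ ((η / (2*B)) ^ (l-2)⁻¹) ^ (l-2) :=
        Real.rpow_le_rpow ht0.le (min_le_right _ _) hl2.le
      rw [Real.rpow_inv_rpow (by positivity) hl2.ne'] at h2
      calc 2 * B * t ^ (l-2) ≤ 2 * B * (η / (2*B)) :=
            mul_le_mul_of_nonneg_left h2 (by linarith)
        _ = η := by field_simp
    refine ⟨min (ε/2) t, lt_min (by linarith) ht0, fun x hx => ?_⟩
    by_cases hxx : x = x₀
    · subst hxx; simp [mul_nonneg hηpos.le (sq_nonneg _)]
    · have hr0 : (0:ℝ) < ‖x - x₀‖ := by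
        rw [norm_pos_iff]; exact sub_ne_zero.mpr hxx
      have hq := hε ⟨by
        rw [Metric.mem_ball]
        have := le_trans hx (min_le_left (ε/2) t)
        linarith, hxx⟩
      have hrl : (0:ℝ) < ‖x - x₀‖ ^ l := Real.rpow_pos_of_pos hr0 l
      rw [Set.mem_setOf_eq] at hq
      have h2 := lt_of_abs_lt hq
      rw [div_lt_iff₀ hrl] at h2
      -- b x - b x₀ < 2 B r^l
      have h3 : b x - b x₀ < 2 * B * ‖x - x₀‖ ^ l := by linarith
      have hsplit : ‖x - x₀‖ ^ l = ‖x - x₀‖ ^ (l-2) * ‖x - x₀‖ ^ 2 := by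
        rw [show ‖x - x₀‖ ^ (2:ℕ) = ‖x - x₀‖ ^ ((2:ℕ):ℝ) from (Real.rpow_natCast _ 2).symm,
          ← Real.rpow_add hr0]
        norm_num
      have hrt : ‖x - x₀‖ ≤ t := by
        have h4 := le_trans hx (min_le_right (ε/2) t)
        rwa [dist_eq_norm] at h4
      have h5 : ‖x - x₀‖ ^ (l-2) ≤ t ^ (l-2) := Real.rpow_le_rpow hr0.le hrt hl2.le
      refine le_of_lt ?_
      calc b x - b x₀ < 2 * B * ‖x - x₀‖ ^ l := h3
        _ = (2 * B * ‖x - x₀‖ ^ (l-2)) * ‖x - x₀‖ ^ 2 := by rw [hsplit]; ring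
        _ ≤ (2 * B * t ^ (l-2)) * ‖x - x₀‖ ^ 2 := by
            apply mul_le_mul_of_nonneg_right _ (sq_nonneg _)
            exact mul_le_mul_of_nonneg_left h5 (by linarith)
        _ ≤ η * ‖x - x₀‖ ^ 2 := mul_le_mul_of_nonneg_right htb (sq_nonneg _)
  -- radii
  set ρ' : ℝ := min ρ (min ρa ρb) with hρ'def
  have hρ'0 : 0 < ρ' := lt_min hρ0 (lt_min hρa0 hρb0)
  have hρ'Ω : Metric.closedBall x₀ ρ' ⊆ Ω :=
    subset_trans (Metric.closedBall_subset_closedBall (min_le_left _ _)) hρΩ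
  have hρ'a : ρ' ≤ ρa := le_trans (min_le_right _ _) (min_le_left _ _)
  have hρ'b : ρ' ≤ ρb := le_trans (min_le_right _ _) (min_le_right _ _)
  clear_value ρ'
  set ξ₁ : ℝ := ρ' / D with hξ₁def
  set ξ₀ : ℝ := ρ' / (2 * D) with hξ₀def
  have hξ₁0 : 0 < ξ₁ := div_pos hρ'0 hD0
  have hξ₀0 : 0 < ξ₀ := div_pos hρ'0 (by linarith)
  have hξ₁D : ξ₁ * D = ρ' := by rw [hξ₁def]; field_simp
  have hξ₀D : ξ₀ * D = ρ' / 2 := by rw [hξ₀def]; field_simp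
  have hξ₀ξ₁ : ξ₀ < ξ₁ := by
    rw [hξ₀def, hξ₁def]
    apply div_lt_div_of_pos_left hρ'0 hD0
    linarith
  clear_value ξ₀ ξ₁
  have hmap : ∀ s : ℝ, |s| < ξ₁ → ∀ y ∈ Ω, x₀ + s • (y - x₀) ∈ Metric.closedBall x₀ ρ' := by
    intro s hs y hy
    rw [Metric.mem_closedBall, dist_self_add_left, norm_smul, Real.norm_eq_abs]
    have h1 : ‖y - x₀‖ ≤ D := hdiam y hy
    calc |s| * ‖y - x₀‖ ≤ |s| * D := by
          exact mul_le_mul_of_nonneg_left h1 (abs_nonneg s)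
      _ ≤ ξ₁ * D := mul_le_mul_of_nonneg_right hs.le hD0.le
      _ = ρ' := hξ₁D
  -- bounds on derivatives of a, b on the ball
  have hcball : IsCompact (Metric.closedBall x₀ ρ') := isCompact_closedBall x₀ ρ'
  have hfda : ContinuousOn (fderiv ℝ a) Ω := ha.continuousOn_fderiv_of_isOpen hΩo le_rfl
  have hfdb : ContinuousOn (fderiv ℝ b) Ω := hb.continuousOn_fderiv_of_isOpen hΩo le_rfl
  obtain ⟨Kda, hKda⟩ := hcball.exists_bound_of_continuousOn (hfda.mono hρ'Ω)
  obtain ⟨Kdb, hKdb⟩ := hcball.exists_bound_of_continuousOn (hfdb.mono hρ'Ω)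
  obtain ⟨Kva, hKva⟩ := hcball.exists_bound_of_continuousOn ((ha.continuousOn).mono hρ'Ω)
  obtain ⟨Kvb, hKvb⟩ := hcball.exists_bound_of_continuousOn ((hb.continuousOn).mono hρ'Ω)
  have hx₀ball : x₀ ∈ Metric.closedBall x₀ ρ' := Metric.mem_closedBall_self hρ'0.le
  have hKda0 : 0 ≤ Kda := le_trans (norm_nonneg _) (hKda x₀ hx₀ball)
  have hKdb0 : 0 ≤ Kdb := le_trans (norm_nonneg _) (hKdb x₀ hx₀ball)
  -- differentiability of a b on Ω
  have hdiffa : ∀ p ∈ Ω, DifferentiableAt ℝ a p := fun p hp =>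
    (ha.differentiableOn one_ne_zero).differentiableAt (hΩo.mem_nhds hp)
  have hdiffb : ∀ p ∈ Ω, DifferentiableAt ℝ b p := fun p hp =>
    (hb.differentiableOn one_ne_zero).differentiableAt (hΩo.mem_nhds hp)
  -- F and F'
  set Fi : ℝ → EuclideanSpace ℝ (Fin N) → ℝ := fun s y => (a (x₀ + s • (y - x₀)) + b (x₀ + s • (y - x₀))) * g y
    with hFidef
  set Fi' : ℝ → EuclideanSpace ℝ (Fin N) → ℝ := fun s y =>
    (fderiv ℝ a (x₀ + s • (y - x₀)) (y - x₀) + fderiv ℝ b (x₀ + s • (y - x₀)) (y - x₀)) * g y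
    with hFi'def
  set F : ℝ → ℝ := fun s => ∫ y in Ω, Fi s y with hFdef
  set F' : ℝ → ℝ := fun s => ∫ y in Ω, Fi' s y with hF'def
  have hcontS : ∀ s : ℝ, Continuous fun y : EuclideanSpace ℝ (Fin N) => x₀ + s • (y - x₀) :=
    fun s => continuous_const.add ((continuous_id.sub continuous_const).const_smul s)
  have hmapsTo : ∀ s : ℝ, |s| < ξ₁ →
      Set.MapsTo (fun y : EuclideanSpace ℝ (Fin N) => x₀ + s • (y - x₀)) Ω Ω :=
    fun s hs y hy => hρ'Ω (hmap s hs y hy)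
  have hFimeas : ∀ s : ℝ, |s| < ξ₁ → AEStronglyMeasurable (Fi s) (volume.restrict Ω) := by
    intro s hs
    have hcont : ContinuousOn
        (fun y => a (x₀ + s • (y - x₀)) + b (x₀ + s • (y - x₀))) Ω :=
      (ha.continuousOn.comp (hcontS s).continuousOn (hmapsTo s hs)).add
        (hb.continuousOn.comp (hcontS s).continuousOn (hmapsTo s hs))
    exact (hcont.aestronglyMeasurable hΩmeas).mul hgmeas.aestronglyMeasurable
  have hFiint : ∀ s : ℝ, |s| < ξ₁ → IntegrableOn (Fi s) Ω := by
    intro s hs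
    refine hbdd_int (Fi s) (hFimeas s hs) ((|Kva| + |Kvb|) * (C:ℝ)^2) fun y hy => ?_
    have hp := hmap s hs y hy
    have h1 : |a (x₀ + s • (y - x₀)) + b (x₀ + s • (y - x₀))| ≤ |Kva| + |Kvb| := by
      have h2 := hKva _ hp
      have h3 := hKvb _ hp
      rw [Real.norm_eq_abs] at h2 h3
      have := abs_add_le (a (x₀ + s • (y - x₀))) (b (x₀ + s • (y - x₀)))
      have h4 : |Kva| ≥ Kva := le_abs_self _
      have h5 : |Kvb| ≥ Kvb := le_abs_self _
      linarith
    rw [hFidef, abs_mul, abs_of_nonneg (hgnonneg y)]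
    exact mul_le_mul h1 (hgbd y) (hgnonneg y) (by positivity)
  have hFi'meas : ∀ s : ℝ, |s| < ξ₁ → AEStronglyMeasurable (Fi' s) (volume.restrict Ω) := by
    intro s hs
    have h1 : ContinuousOn (fun y => fderiv ℝ a (x₀ + s • (y - x₀)) (y - x₀)
        + fderiv ℝ b (x₀ + s • (y - x₀)) (y - x₀)) Ω := by
      have hsub : ContinuousOn (fun y : EuclideanSpace ℝ (Fin N) => y - x₀) Ω :=
        (continuous_id.sub continuous_const).continuousOn
      exact ((hfda.comp (hcontS s).continuousOn (hmapsTo s hs)).clm_apply hsub).add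
        ((hfdb.comp (hcontS s).continuousOn (hmapsTo s hs)).clm_apply hsub)
    exact (h1.aestronglyMeasurable hΩmeas).mul hgmeas.aestronglyMeasurable
  have hF : ∀ s : ℝ, |s| < ξ₁ → HasDerivAt F (F' s) s := by
    intro s₀ hs₀
    have hε : 0 < ξ₁ - |s₀| := by linarith
    have hball : ∀ t ∈ Metric.ball s₀ (ξ₁ - |s₀|), |t| < ξ₁ := by
      intro t ht
      rw [Metric.mem_ball, Real.dist_eq] at ht
      calc |t| = |s₀ + (t - s₀)| := by ring_nf
        _ ≤ |s₀| + |t - s₀| := abs_add_le _ _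
        _ < ξ₁ := by linarith
    have key := hasDerivAt_integral_of_dominated_loc_of_deriv_le (μ := volume.restrict Ω)
      (F := Fi) (F' := Fi') (x₀ := s₀)
      (bound := fun _ => (|Kda| + |Kdb|) * D * (C:ℝ)^2) (Metric.ball_mem_nhds s₀ hε)
      (Filter.eventually_of_mem (Metric.ball_mem_nhds s₀ hε) fun t ht => hFimeas t (hball t ht))
      (hFiint s₀ hs₀) (hFi'meas s₀ hs₀) ?_ (integrableOn_const hfin.ne) ?_
    · exact key.2
    · -- bound
      rw [ae_restrict_iff' hΩmeas]
      refine ae_of_all _ fun y hy => fun t ht => ?_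
      have hp := hmap t (hball t ht) y hy
      have hd1 := hKda _ hp
      have hd2 := hKdb _ hp
      have hyd : ‖y - x₀‖ ≤ D := hdiam y hy
      have hnn : (0:ℝ) ≤ ‖y - x₀‖ := norm_nonneg _
      have hA : |fderiv ℝ a (x₀ + t • (y - x₀)) (y - x₀)| ≤ |Kda| * D := by
        have := (fderiv ℝ a (x₀ + t • (y - x₀))).le_opNorm (y - x₀)
        rw [← Real.norm_eq_abs]
        calc ‖fderiv ℝ a (x₀ + t • (y - x₀)) (y - x₀)‖
            ≤ ‖fderiv ℝ a (x₀ + t • (y - x₀))‖ * ‖y - x₀‖ := this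
          _ ≤ |Kda| * D := by
              apply mul_le_mul (le_trans hd1 (le_abs_self _)) hyd hnn (abs_nonneg _)
      have hB : |fderiv ℝ b (x₀ + t • (y - x₀)) (y - x₀)| ≤ |Kdb| * D := by
        have := (fderiv ℝ b (x₀ + t • (y - x₀))).le_opNorm (y - x₀)
        rw [← Real.norm_eq_abs]
        calc ‖fderiv ℝ b (x₀ + t • (y - x₀)) (y - x₀)‖
            ≤ ‖fderiv ℝ b (x₀ + t • (y - x₀))‖ * ‖y - x₀‖ := this
          _ ≤ |Kdb| * D := by
              apply mul_le_mul (le_trans hd2 (le_abs_self _)) hyd hnn (abs_nonneg _)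
      rw [hFi'def, Real.norm_eq_abs, abs_mul, abs_of_nonneg (hgnonneg y)]
      have habsum : |fderiv ℝ a (x₀ + t • (y - x₀)) (y - x₀)
          + fderiv ℝ b (x₀ + t • (y - x₀)) (y - x₀)| ≤ |Kda| * D + |Kdb| * D := by
        have := abs_add_le (fderiv ℝ a (x₀ + t • (y - x₀)) (y - x₀))
          (fderiv ℝ b (x₀ + t • (y - x₀)) (y - x₀))
        linarith
      calc |fderiv ℝ a (x₀ + t • (y - x₀)) (y - x₀)
            + fderiv ℝ b (x₀ + t • (y - x₀)) (y - x₀)| * g y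
          ≤ (|Kda| * D + |Kdb| * D) * (C:ℝ)^2 :=
            mul_le_mul habsum (hgbd y) (hgnonneg y) (by positivity)
        _ = (|Kda| + |Kdb|) * D * (C:ℝ)^2 := by ring
    · -- differentiability
      rw [ae_restrict_iff' hΩmeas]
      refine ae_of_all _ fun y hy => fun t ht => ?_
      have hp : x₀ + t • (y - x₀) ∈ Ω := hρ'Ω (hmap t (hball t ht) y hy)
      have hline : HasDerivAt (fun t : ℝ => x₀ + t • (y - x₀)) (y - x₀) t := by
        simpa using ((hasDerivAt_id t).smul_const (y - x₀)).const_add x₀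
      have hda : HasDerivAt (fun t : ℝ => a (x₀ + t • (y - x₀)))
          (fderiv ℝ a (x₀ + t • (y - x₀)) (y - x₀)) t :=
        (hdiffa _ hp).hasFDerivAt.comp_hasDerivAt t hline
      have hdb : HasDerivAt (fun t : ℝ => b (x₀ + t • (y - x₀)))
          (fderiv ℝ b (x₀ + t • (y - x₀)) (y - x₀)) t :=
        (hdiffb _ hp).hasFDerivAt.comp_hasDerivAt t hline
      exact (hda.add hdb).mul_const (g y)
  -- key claim
  set κ : ℝ := 2 * A₂ * lam₁ * D ^ 2 + 4 * δ with hκdef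
  obtain ⟨ξ, hξ0, hξle, hkey⟩ : ∃ ξ : ℝ, 0 < ξ ∧ ξ ≤ ξ₀ ∧ F' ξ ≤ κ * ξ * Q := by
    by_contra hcon
    push_neg at hcon
    have hcon' : ∀ s : ℝ, 0 < s → s ≤ ξ₀ → κ * s * Q < F' s := fun s h1 h2 => hcon s h1 h2
    set Φ : ℝ → ℝ := fun s => F s - κ * Q / 2 * s ^ 2 with hΦdef
    have habs : ∀ s ∈ Set.Icc (0:ℝ) ξ₀, |s| < ξ₁ := by
      intro s hs
      rw [abs_of_nonneg hs.1]
      exact lt_of_le_of_lt hs.2 hξ₀ξ₁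
    have hΦd : ∀ s ∈ Set.Icc (0:ℝ) ξ₀, HasDerivAt Φ (F' s - κ * Q * s) s := by
      intro s hs
      have h2 : HasDerivAt (fun x : ℝ => κ * Q / 2 * x ^ 2) (κ * Q * s) s := by
        have h3 := (hasDerivAt_pow 2 s).const_mul (κ * Q / 2)
        exact h3.congr_deriv (by push_cast; ring)
      exact (hF s (habs s hs)).sub h2
    have hmono : StrictMonoOn Φ (Set.Icc 0 ξ₀) := by
      apply strictMonoOn_of_deriv_pos (convex_Icc _ _)
      · intro s hs
        exact ((hΦd s hs).continuousAt).continuousWithinAt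
      · intro s hs
        rw [interior_Icc] at hs
        rw [(hΦd s (Set.mem_Icc_of_Ioo hs)).deriv]
        have := hcon' s hs.1 hs.2.le
        linarith
    have hlt : Φ 0 < Φ ξ₀ :=
      hmono (Set.left_mem_Icc.mpr hξ₀0.le) (Set.right_mem_Icc.mpr hξ₀0.le) hξ₀0
    have hΦ0 : Φ 0 = F 0 := by rw [hΦdef]; simp
    have hΦξ₀ : Φ ξ₀ = F ξ₀ - κ * Q / 2 * ξ₀ ^ 2 := rfl
    have habs0 : |(0:ℝ)| < ξ₁ := by simpa using hξ₁0
    have habsξ₀ : |ξ₀| < ξ₁ := by rw [abs_of_pos hξ₀0]; exact hξ₀ξ₁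
    have hsub : F ξ₀ - F 0 = ∫ y in Ω, (Fi ξ₀ y - Fi 0 y) :=
      (integral_sub (hFiint ξ₀ habsξ₀) (hFiint 0 habs0)).symm
    have hup : ∫ y in Ω, (Fi ξ₀ y - Fi 0 y)
        ≤ (A₂ + 2*η) * (ξ₀^2 * D^2) * (lam₁ * Q) := by
      have hmono2 : ∫ y in Ω, (Fi ξ₀ y - Fi 0 y)
          ≤ ∫ y in Ω, (A₂ + 2*η) * (ξ₀^2 * D^2) * g y := by
        refine setIntegral_mono_on ((hFiint ξ₀ habsξ₀).sub (hFiint 0 habs0))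
          (hgint.const_mul _) hΩmeas ?_
        intro y hy
        have hp := hmap ξ₀ habsξ₀ y hy
        have hpΩ : x₀ + ξ₀ • (y - x₀) ∈ Ω := hρ'Ω hp
        have hdist : dist (x₀ + ξ₀ • (y - x₀)) x₀ ≤ ρ' := Metric.mem_closedBall.mp hp
        have hnorm1 : ‖(x₀ + ξ₀ • (y - x₀)) - x₀‖ = ξ₀ * ‖y - x₀‖ := by
          rw [add_sub_cancel_left, norm_smul, Real.norm_eq_abs, abs_of_pos hξ₀0]
        have hnd : ‖(x₀ + ξ₀ • (y - x₀)) - x₀‖ ≤ ξ₀ * D := by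
          rw [hnorm1]
          exact mul_le_mul_of_nonneg_left (hdiam y hy) hξ₀0.le
        have ha1 : a (x₀ + ξ₀ • (y - x₀)) - a x₀ ≤ (A₂ + η) * ‖(x₀ + ξ₀ • (y - x₀)) - x₀‖ ^ 2 :=
          hρa _ (le_trans hdist hρ'a)
        have hb1 : b (x₀ + ξ₀ • (y - x₀)) - b x₀ ≤ η * ‖(x₀ + ξ₀ • (y - x₀)) - x₀‖ ^ 2 :=
          hρb _ (le_trans hdist hρ'b)
        have hsq : ‖(x₀ + ξ₀ • (y - x₀)) - x₀‖ ^ 2 ≤ ξ₀^2 * D^2 := by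
          rw [show ξ₀^2 * D^2 = (ξ₀*D)^2 by ring]
          exact pow_le_pow_left₀ (norm_nonneg _) hnd 2
        have hFi0 : Fi 0 y = (a x₀ + b x₀) * g y := by
          have he : Fi 0 y
              = (a (x₀ + (0:ℝ) • (y - x₀)) + b (x₀ + (0:ℝ) • (y - x₀))) * g y := rfl
          rw [he]
          norm_num
        have hFiξ : Fi ξ₀ y
            = (a (x₀ + ξ₀ • (y - x₀)) + b (x₀ + ξ₀ • (y - x₀))) * g y := rfl
        have hval : Fi ξ₀ y - Fi 0 y
            = ((a (x₀ + ξ₀ • (y - x₀)) - a x₀) + (b (x₀ + ξ₀ • (y - x₀)) - b x₀)) * g y := by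
          rw [hFiξ, hFi0]
          ring
        rw [hval]
        have hsum : (a (x₀ + ξ₀ • (y - x₀)) - a x₀) + (b (x₀ + ξ₀ • (y - x₀)) - b x₀)
            ≤ (A₂ + 2*η) * (ξ₀^2 * D^2) := by
          have h6 : (A₂ + 2*η) * ‖(x₀ + ξ₀ • (y - x₀)) - x₀‖ ^ 2
              ≤ (A₂ + 2*η) * (ξ₀^2 * D^2) :=
            mul_le_mul_of_nonneg_left hsq (by linarith)
          linarith
        exact mul_le_mul_of_nonneg_right hsum (hgnonneg y)
      rw [MeasureTheory.integral_const_mul, hM] at hmono2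
      exact hmono2
    have hcontr : κ * Q / 2 * ξ₀ ^ 2 < (A₂ + 2*η) * (ξ₀^2 * D^2) * (lam₁ * Q) := by
      rw [hΦ0, hΦξ₀] at hlt
      linarith [hsub ▸ hup]
    have hq2 : 0 < Q * ξ₀^2 := mul_pos hQpos (pow_pos hξ₀0 2)
    have h9 : η * (D^2 * lam₁) * (Q * ξ₀^2) < δ * (Q * ξ₀^2) :=
      mul_lt_mul_of_pos_right hηδ hq2
    rw [hκdef] at hcontr
    linarith [hcontr, h9]
  -- build ψ
  have hξne : ξ ≠ 0 := hξ0.ne'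
  set S : EuclideanSpace ℝ (Fin N) → EuclideanSpace ℝ (Fin N) := fun x => x₀ + ξ⁻¹ • (x - x₀) with hSdef
  set ψ : EuclideanSpace ℝ (Fin N) → ℝ := fun x => φ₁ (S x) with hψdef
  have hTS : ∀ x : EuclideanSpace ℝ (Fin N), x₀ + ξ • (S x - x₀) = x := by
    intro x
    simp [hSdef, smul_smul, mul_inv_cancel₀ hξne]
  have hST : ∀ z : EuclideanSpace ℝ (Fin N), S (x₀ + ξ • (z - x₀)) = z := by
    intro z
    simp [hSdef, smul_smul, inv_mul_cancel₀ hξne]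
  have hsupp : ∀ x : EuclideanSpace ℝ (Fin N), ψ x ≠ 0 → x ∈ Metric.closedBall x₀ (ξ * D) := by
    intro x hx
    have hSx : S x ∈ Ω := by
      by_contra hc
      exact hx (hφ₁0 _ hc)
    have h1 : dist (S x) x₀ ≤ D := by
      have := hdiam (S x) hSx
      rwa [dist_eq_norm]
    rw [Metric.mem_closedBall, dist_eq_norm]
    have h2 : ‖x - x₀‖ = ξ * ‖S x - x₀‖ := by
      have : S x - x₀ = ξ⁻¹ • (x - x₀) := by simp [hSdef]
      rw [this, norm_smul, Real.norm_eq_abs, abs_of_pos (inv_pos.mpr hξ0)]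
      field_simp
    rw [h2]
    rw [dist_eq_norm] at h1
    exact mul_le_mul_of_nonneg_left h1 hξ0.le
  have hballΩ : Metric.closedBall x₀ (ξ * D) ⊆ Ω := by
    refine subset_trans (Metric.closedBall_subset_closedBall ?_) hρ'Ω
    calc ξ * D ≤ ξ₀ * D := mul_le_mul_of_nonneg_right hξle hD0.le
      _ = ρ' / 2 := hξ₀D
      _ ≤ ρ' := by linarith
  have htsupp : tsupport ψ ⊆ Metric.closedBall x₀ (ξ * D) :=
    closure_minimal (fun x hx => hsupp x hx) Metric.isClosed_closedBall
  have hψ0out : ∀ x ∉ Ω, ψ x = 0 := by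
    intro x hx
    by_contra hc
    exact hx (hballΩ (hsupp x hc))
  have hψnonneg : ∀ x, 0 ≤ ψ x := fun x => hφ₁nonneg _
  have hfψ0 : ∀ x ∉ Ω, fderiv ℝ ψ x = 0 := by
    intro x hx
    apply aux_fderiv_min
    intro z
    rw [hψ0out x hx]
    exact hψnonneg z
  -- Lipschitz
  have hψlip : LipschitzWith (C * ‖ξ⁻¹‖₊) ψ := by
    apply LipschitzWith.of_dist_le_mul
    intro x y
    have h1 := hC.dist_le_mul (S x) (S y)
    have h2 : dist (S x) (S y) = ‖ξ⁻¹‖ * dist x y := by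
      rw [dist_eq_norm, dist_eq_norm]
      have h3 : S x - S y = ξ⁻¹ • (x - y) := by
        rw [hSdef]
        simp only [smul_sub]
        abel
      rw [h3, norm_smul]
    calc dist (ψ x) (ψ y) ≤ C * dist (S x) (S y) := h1
      _ = (C : ℝ) * (‖ξ⁻¹‖ * dist x y) := by rw [h2]
      _ = ((C * ‖ξ⁻¹‖₊ : NNReal) : ℝ) * dist x y := by
          push_cast
          ring
  -- integral identities
  have hψsq : ∫ x in Ω, (ψ x) ^ 2 = ξ ^ N * Q := by
    have e1 : ∫ x in Ω, (ψ x) ^ 2 = ∫ x, (ψ x) ^ 2 := by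
      rw [← integral_indicator hΩmeas]
      congr 1
      funext x
      by_cases hx : x ∈ Ω
      · rw [Set.indicator_of_mem hx]
      · rw [Set.indicator_of_notMem hx, hψ0out x hx]
        norm_num
    have e2 : ∫ x, (ψ x) ^ 2 = ξ ^ N * ∫ z, (φ₁ z) ^ 2 := by
      have := aux_integral_scale (fun z => (φ₁ z) ^ 2) x₀ hξ0
      exact this
    have e3 : ∫ z, (φ₁ z) ^ 2 = Q := by
      rw [hQdef, ← integral_indicator hΩmeas]
      congr 1
      funext x
      by_cases hx : x ∈ Ω
      · rw [Set.indicator_of_mem hx]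
      · rw [Set.indicator_of_notMem hx, hφ₁0 x hx]
        norm_num
    rw [e1, e2, e3]
  have hmain : ∫ x in Ω, (fderiv ℝ a x (x - x₀) + fderiv ℝ b x (x - x₀)) * ‖fderiv ℝ ψ x‖ ^ 2
      = ξ⁻¹ ^ 2 * (ξ ^ N * (ξ * F' ξ)) := by
    set H : EuclideanSpace ℝ (Fin N) → ℝ := fun z =>
      (fderiv ℝ a (x₀ + ξ • (z - x₀)) ((x₀ + ξ • (z - x₀)) - x₀)
        + fderiv ℝ b (x₀ + ξ • (z - x₀)) ((x₀ + ξ • (z - x₀)) - x₀)) * g z with hHdef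
    have hnorm : ∀ x, ‖fderiv ℝ ψ x‖ = ξ⁻¹ * ‖fderiv ℝ φ₁ (S x)‖ := by
      intro x
      have h0 := aux_fderiv_scale φ₁ x₀ (inv_ne_zero hξne) x
      have h1 : fderiv ℝ ψ x = ξ⁻¹ • fderiv ℝ φ₁ (S x) := h0
      rw [h1, norm_smul, Real.norm_eq_abs, abs_of_pos (inv_pos.mpr hξ0)]
    have eA : ∫ x in Ω, (fderiv ℝ a x (x - x₀) + fderiv ℝ b x (x - x₀)) * ‖fderiv ℝ ψ x‖ ^ 2
        = ∫ x, (fderiv ℝ a x (x - x₀) + fderiv ℝ b x (x - x₀)) * ‖fderiv ℝ ψ x‖ ^ 2 := by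
      rw [← integral_indicator hΩmeas]
      congr 1
      funext x
      by_cases hx : x ∈ Ω
      · rw [Set.indicator_of_mem hx]
      · rw [Set.indicator_of_notMem hx, hfψ0 x hx]
        norm_num
    have eB : ∫ x, (fderiv ℝ a x (x - x₀) + fderiv ℝ b x (x - x₀)) * ‖fderiv ℝ ψ x‖ ^ 2
        = ξ⁻¹ ^ 2 * ∫ x, H (S x) := by
      rw [← MeasureTheory.integral_const_mul]
      congr 1
      funext x
      rw [hnorm x, hHdef]
      simp only [hTS x]
      rw [hgdef]
      ring
    have eC : ∫ x, H (S x) = ξ ^ N * ∫ z, H z := aux_integral_scale H x₀ hξ0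
    have eD : ∫ z, H z = ∫ z in Ω, H z := by
      rw [← integral_indicator hΩmeas]
      congr 1
      funext z
      by_cases hz : z ∈ Ω
      · rw [Set.indicator_of_mem hz]
      · rw [Set.indicator_of_notMem hz, hHdef]
        simp only [hgdef]
        rw [hfφ₁0 z hz]
        norm_num
    have eE : ∫ z in Ω, H z = ξ * F' ξ := by
      have hF'ξ : F' ξ = ∫ z in Ω, Fi' ξ z := rfl
      rw [hF'ξ, ← MeasureTheory.integral_const_mul]
      congr 1
      funext z
      have hHz : H z = (fderiv ℝ a (x₀ + ξ • (z - x₀)) ((x₀ + ξ • (z - x₀)) - x₀)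
          + fderiv ℝ b (x₀ + ξ • (z - x₀)) ((x₀ + ξ • (z - x₀)) - x₀)) * g z := rfl
      have hFz : Fi' ξ z = (fderiv ℝ a (x₀ + ξ • (z - x₀)) (z - x₀)
          + fderiv ℝ b (x₀ + ξ • (z - x₀)) (z - x₀)) * g z := rfl
      rw [hHz, hFz]
      have h1 : (x₀ + ξ • (z - x₀)) - x₀ = ξ • (z - x₀) := add_sub_cancel_left x₀ _
      rw [h1, ContinuousLinearMap.map_smul, ContinuousLinearMap.map_smul, smul_eq_mul, smul_eq_mul]
      ring
    rw [eA, eB, eC, eD, eE]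
  refine ⟨ψ, ⟨C * ‖ξ⁻¹‖₊, hψlip⟩, ?_, ?_, ?_, ?_⟩
  · exact IsCompact.of_isClosed_subset (isCompact_closedBall x₀ (ξ * D))
      (isClosed_tsupport ψ) htsupp
  · exact subset_trans htsupp hballΩ
  · rw [hψsq]
    exact mul_pos (pow_pos hξ0 N) hQpos
  · rw [hψsq, hmain]
    exact aux_arith hξ0 hkey (by rw [hκdef]; ring) N
end
end
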